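/- For the simple Lindblad generator L(X) = X − tr(σX)·I with σ > 0, and any density matrix ρ commuting with σ considered via X = Γ_σ^{-1/2}(√ρ) = σ^{-1/4} √ρ σ^{-1/4}: the Dirichlet form evaluates as ⟨X, L(X)⟩_σ = 1 − (tr(√σ √ρ))², and the entropy evaluates as Ent_{2,σ}(X) = D(ρ‖σ). -/

import Mathlib

open Matrix BigOperators
open scoped ComplexOrder

noncomputable section

variable {n : Type*} [Fintype n] [DecidableEq n]

/-- Apply a real function to a matrix via its spectral decomposition
(defined to be `0` if the matrix is not Hermitian). -/
noncomputable def matFun (A : Matrix n n ℂ) (f : ℝ → ℝ) : Matrix n n ℂ :=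
  if hA : A.IsHermitian then
    (hA.eigenvectorUnitary : Matrix n n ℂ) *
      Matrix.diagonal (fun i => (f (hA.eigenvalues i) : ℂ)) *
      star (hA.eigenvectorUnitary : Matrix n n ℂ)
  else 0

/-- Real power of a (Hermitian) matrix. -/
noncomputable def mpow (A : Matrix n n ℂ) (r : ℝ) : Matrix n n ℂ :=
  matFun A (fun x => x ^ r)

/-- Logarithm of a (Hermitian) matrix. -/
noncomputable def mlog (A : Matrix n n ℂ) : Matrix n n ℂ :=
  matFun A Real.log

/-- Absolute value `|X| = √(X† X)` of a matrix. -/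
noncomputable def mAbs (X : Matrix n n ℂ) : Matrix n n ℂ :=
  mpow (Xᴴ * X) (1/2 : ℝ)

/-- Schatten `p`-(quasi)norm `(tr |X|^p)^{1/p}`. -/
noncomputable def schatten (p : ℝ) (X : Matrix n n ℂ) : ℝ :=
  ((mpow (mAbs X) p).trace.re) ^ (1/p)

/-- `Γ_σ^{1/p}(X) = σ^{1/(2p)} X σ^{1/(2p)}`. -/
noncomputable def gammaPow (σ : Matrix n n ℂ) (p : ℝ) (X : Matrix n n ℂ) :
    Matrix n n ℂ :=
  mpow σ (1/(2*p)) * X * mpow σ (1/(2*p))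

/-- Weighted norm `‖X‖_{p,σ} = ‖Γ_σ^{1/p}(X)‖_p`. -/
noncomputable def wnorm (σ : Matrix n n ℂ) (p : ℝ) (X : Matrix n n ℂ) : ℝ :=
  schatten p (gammaPow σ p X)

/-- The power operator `I_{q,p}(X) = Γ_σ^{-1/q}(|Γ_σ^{1/p}(X)|^{p/q})`. -/
noncomputable def powOp (σ : Matrix n n ℂ) (q p : ℝ) (X : Matrix n n ℂ) :
    Matrix n n ℂ :=
  mpow σ (-(1/(2*q))) * mpow (mAbs (gammaPow σ p X)) (p/q) * mpow σ (-(1/(2*q)))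

/-- Umegaki relative entropy `D(ρ‖σ) = tr(ρ log ρ) - tr(ρ log σ)`. -/
noncomputable def relEnt (ρ σ : Matrix n n ℂ) : ℝ :=
  ((ρ * mlog ρ).trace - (ρ * mlog σ).trace).re

/-- The entropy function `Ent_{p,σ}(X)`. -/
noncomputable def Ent (σ : Matrix n n ℂ) (p : ℝ) (X : Matrix n n ℂ) : ℝ :=
  ((mpow (gammaPow σ p X) p * mlog (mpow (gammaPow σ p X) p)).trace).re -
    ((mpow (gammaPow σ p X) p * mlog σ).trace).re -
    (wnorm σ p X) ^ p * Real.log ((wnorm σ p X) ^ p)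

end
noncomputable section AuxLemmas
variable {n : Type*} [Fintype n] [DecidableEq n]

lemma matFun_eq {A : Matrix n n ℂ} (hA : A.IsHermitian) (f : ℝ → ℝ) :
    matFun A f = (hA.eigenvectorUnitary : Matrix n n ℂ) *
      Matrix.diagonal (fun i => (f (hA.eigenvalues i) : ℂ)) *
      star (hA.eigenvectorUnitary : Matrix n n ℂ) := by
  unfold matFun; rw [dif_pos hA]

lemma matFun_isHermitian {A : Matrix n n ℂ} (hA : A.IsHermitian) (f : ℝ → ℝ) :
    (matFun A f).IsHermitian := by
  rw [matFun_eq hA f, Matrix.IsHermitian]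
  simp [Matrix.conjTranspose_mul, Matrix.diagonal_conjTranspose, mul_assoc,
    Matrix.star_eq_conjTranspose, Matrix.conjTranspose_conjTranspose,
    Pi.star_def, Complex.star_def, Complex.conj_ofReal]

lemma matFun_mul {A : Matrix n n ℂ} (hA : A.IsHermitian) (f g : ℝ → ℝ) :
    matFun A f * matFun A g = matFun A (fun x => f x * g x) := by
  have hU : star (hA.eigenvectorUnitary : Matrix n n ℂ) *
      (hA.eigenvectorUnitary : Matrix n n ℂ) = 1 :=
    Matrix.mem_unitaryGroup_iff'.mp hA.eigenvectorUnitary.2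
  rw [matFun_eq hA f, matFun_eq hA g, matFun_eq hA (fun x => f x * g x)]
  simp only [mul_assoc]
  rw [← mul_assoc (star (hA.eigenvectorUnitary : Matrix n n ℂ))
    (hA.eigenvectorUnitary : Matrix n n ℂ), hU, one_mul,
    ← mul_assoc (Matrix.diagonal _) (Matrix.diagonal _), Matrix.diagonal_mul_diagonal]
  simp [Complex.ofReal_mul]

lemma matFun_congr {A : Matrix n n ℂ} (hA : A.IsHermitian) {f g : ℝ → ℝ}
    (h : ∀ i, f (hA.eigenvalues i) = g (hA.eigenvalues i)) :
    matFun A f = matFun A g := by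
  have hfg : (fun i => (f (hA.eigenvalues i) : ℂ)) =
      fun i => (g (hA.eigenvalues i) : ℂ) := by
    funext i; rw [h i]
  rw [matFun_eq hA f, matFun_eq hA g, hfg]

lemma matFun_id {A : Matrix n n ℂ} (hA : A.IsHermitian) :
    matFun A (fun x => x) = A := by
  rw [matFun_eq hA]
  exact hA.spectral_theorem.symm

lemma matFun_const_one {A : Matrix n n ℂ} (hA : A.IsHermitian) :
    matFun A (fun _ => 1) = 1 := by
  have hU : (hA.eigenvectorUnitary : Matrix n n ℂ) *
      star (hA.eigenvectorUnitary : Matrix n n ℂ) = 1 :=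
    Matrix.mem_unitaryGroup_iff.mp hA.eigenvectorUnitary.2
  rw [matFun_eq hA]
  simp [hU]

lemma mpow_isHermitian {A : Matrix n n ℂ} (hA : A.IsHermitian) (r : ℝ) :
    (mpow A r).IsHermitian := matFun_isHermitian hA _

lemma mpow_add {σ : Matrix n n ℂ} (hσ : σ.PosDef) (a b : ℝ) :
    mpow σ a * mpow σ b = mpow σ (a + b) := by
  unfold mpow
  rw [matFun_mul hσ.1]
  exact matFun_congr hσ.1 fun i => (Real.rpow_add (hσ.eigenvalues_pos i) a b).symm

lemma mpow_zero {A : Matrix n n ℂ} (hA : A.IsHermitian) : mpow A (0:ℝ) = 1 := by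
  unfold mpow
  rw [matFun_congr hA (g := fun _ => 1) (fun i => Real.rpow_zero _), matFun_const_one hA]

lemma mpow_one {A : Matrix n n ℂ} (hA : A.IsHermitian) : mpow A (1:ℝ) = A := by
  unfold mpow
  rw [matFun_congr hA (g := fun x => x) (fun i => Real.rpow_one _), matFun_id hA]

lemma mpow_two {A : Matrix n n ℂ} (hA : A.IsHermitian) : mpow A (2:ℝ) = A * A := by
  unfold mpow
  have h : ∀ i, (hA.eigenvalues i : ℝ) ^ (2:ℝ) = hA.eigenvalues i * hA.eigenvalues i := by
    intro i
    rw [show (2:ℝ) = ((2:ℕ):ℝ) by norm_num, Real.rpow_natCast]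
    ring
  have h2 : matFun A (fun x => x) * matFun A (fun x => x) = matFun A (fun x => x * x) :=
    matFun_mul hA (fun x => x) (fun x => x)
  rw [matFun_congr hA (g := fun x => x * x) h, ← h2, matFun_id hA]

lemma mul_mpow {σ : Matrix n n ℂ} (hσ : σ.PosDef) (e : ℝ) :
    σ * mpow σ e = mpow σ (1 + e) := by
  calc σ * mpow σ e = mpow σ 1 * mpow σ e := by rw [mpow_one hσ.1]
    _ = mpow σ (1 + e) := mpow_add hσ 1 e

lemma sandwich {σ : Matrix n n ℂ} (hσ : σ.PosDef) (M : Matrix n n ℂ) (a b c d : ℝ) :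
    mpow σ a * (mpow σ b * M * mpow σ c) * mpow σ d =
      mpow σ (a + b) * M * mpow σ (c + d) := by
  rw [← mpow_add hσ a b, ← mpow_add hσ c d]
  simp only [mul_assoc]

end AuxLemmas

/-- For the simple Lindblad generator `L(X) = X - tr(σX)·I` and
`X = σ^{-1/4} √ρ σ^{-1/4}` with `ρ` a density matrix commuting with `σ`:
`⟨X, L(X)⟩_σ = 1 - (tr(√σ √ρ))²` and `Ent_{2,σ}(X) = D(ρ‖σ)`. -/
theorem simple_generator_eval {n : Type*} [Fintype n] [DecidableEq n]
    (σ : Matrix n n ℂ) (hσ : σ.PosDef) (hσ1 : σ.trace = 1)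
    (ρ : Matrix n n ℂ) (hρ : ρ.PosDef) (hρ1 : ρ.trace = 1)
    (hcomm : ρ * σ = σ * ρ)
    (X : Matrix n n ℂ) (hX : X = mpow σ (-(1/4)) * mpow ρ (1/2) * mpow σ (-(1/4))) :
    ((mpow σ (1/2) * X * mpow σ (1/2) * (X - (σ * X).trace • 1)).trace).re =
      1 - (((mpow σ (1/2) * mpow ρ (1/2)).trace).re) ^ 2 ∧
    Ent σ 2 X = relEnt ρ σ := by
  have hσH := hσ.1
  have hρH := hρ.1
  have hs := mpow_add hσ
  have hr := mpow_add hρ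
  have hσ0 : mpow σ (0:ℝ) = 1 := mpow_zero hσH
  have hρI : mpow ρ (1:ℝ) = ρ := mpow_one hρH
  set t : ℂ := (mpow σ (1/2) * mpow ρ (1/2)).trace with ht
  -- X sandwiched between σ^{1/2}'s
  have hXl : mpow σ (1/2) * X * mpow σ (1/2)
      = mpow σ (1/4) * mpow ρ (1/2) * mpow σ (1/4) := by
    rw [hX, sandwich hσ]
    norm_num
  -- trace (σ X) = t
  have hσX : (σ * X).trace = t := by
    rw [hX, ← mul_assoc, ← mul_assoc, mul_mpow hσ, Matrix.trace_mul_cycle, hs, ht]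
    norm_num
  -- trace (P X) = 1
  have hPX : (mpow σ (1/4) * mpow ρ (1/2) * mpow σ (1/4) * X).trace = 1 := by
    rw [hX]
    have h1 : mpow σ (1/4) * mpow σ (-(1/4)) = 1 := by
      rw [hs]; norm_num [hσ0]
    have h2 : mpow ρ (1/2) * mpow ρ (1/2) = ρ := by
      rw [hr]; norm_num [hρI]
    have key : mpow σ (1/4) * mpow ρ (1/2) * mpow σ (1/4) *
        (mpow σ (-(1/4)) * mpow ρ (1/2) * mpow σ (-(1/4)))
        = mpow σ (1/4) * ρ * mpow σ (-(1/4)) := by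
      simp only [mul_assoc]
      rw [← mul_assoc (mpow σ (1/4)) (mpow σ (-(1/4))), h1, one_mul,
        ← mul_assoc (mpow ρ (1/2)) (mpow ρ (1/2)), h2]
    rw [key, Matrix.trace_mul_cycle, hs]
    norm_num [hσ0, hρ1]
  -- trace P = t
  have hP : (mpow σ (1/4) * mpow ρ (1/2) * mpow σ (1/4)).trace = t := by
    rw [Matrix.trace_mul_cycle, hs, ht]
    norm_num
  -- t is real
  have hstar : (starRingEnd ℂ) t = t := by
    calc (starRingEnd ℂ) t = ((mpow σ (1/2) * mpow ρ (1/2))ᴴ).trace :=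
          (Matrix.trace_conjTranspose _).symm
      _ = (mpow ρ (1/2) * mpow σ (1/2)).trace := by
          rw [Matrix.conjTranspose_mul, (mpow_isHermitian hσH (1/2) : _ = _),
            (mpow_isHermitian hρH (1/2) : _ = _)]
      _ = t := Matrix.trace_mul_comm _ _
  have him : t.im = 0 := by
    have h2 : -t.im = t.im := by
      have := congrArg Complex.im hstar
      simpa using this
    linarith
  constructor
  · -- Dirichlet form
    have hmain : (mpow σ (1/2) * X * mpow σ (1/2) * (X - (σ * X).trace • 1)).trace
        = 1 - t * t := by
      rw [hXl, mul_sub, Matrix.trace_sub, hPX, mul_smul_comm, mul_one,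
        Matrix.trace_smul, smul_eq_mul, hP, hσX]
    rw [hmain]
    simp [Complex.sub_re, Complex.mul_re, him, sq]
  · -- Entropy
    have hG : gammaPow σ 2 X = mpow ρ (1/2) := by
      unfold gammaPow
      rw [hX, sandwich hσ]
      norm_num [hσ0]
    have hG2 : mpow (gammaPow σ 2 X) (2:ℝ) = ρ := by
      rw [hG, mpow_two (mpow_isHermitian hρH _), hr]
      norm_num [hρI]
    have hAbs : mAbs (mpow ρ (1/2)) = mpow ρ (1/2) := by
      unfold mAbs
      rw [(mpow_isHermitian hρH (1/2) : _ = _), hr]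
      norm_num [hρI]
    have hw : wnorm σ (2:ℝ) X = 1 := by
      unfold wnorm schatten
      rw [hG, hAbs, mpow_two (mpow_isHermitian hρH _), hr]
      norm_num [hρI, hρ1, Real.one_rpow]
    unfold Ent relEnt
    rw [hG2, hw]
    simp [Real.one_rpow, Real.log_one, Complex.sub_re]
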